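/- Let R be a discrete valuation ring in which 2 is a unit, with fraction field K, and let q be a nondegenerate quadratic form of rank 4 over K. Then there exists a nonzero scalar c ∈ K such that q is equivalent to c·q′, where q′ is one of the following diagonal forms: (I) ⟨1, −a, −b, a·b·d⟩ with a, b, d units of R; (II) ⟨1, −a, −b, π⟩ with a, b units of R and π a uniformizer of R; (III) ⟨1, −a, π, −π·b⟩ with a, b units of R and π a uniformizer of R. -/

import Mathlib

open QuadraticMap

section helpers
variable {K : Type*} [Field K] {ι : Type*} [Fintype ι]

theorem smul_wss (c : K) (w : ι → K) :
    c • weightedSumSquares K w = weightedSumSquares K (fun i => c * w i) := by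
  ext x
  simp [weightedSumSquares_apply, Finset.mul_sum, mul_assoc]

theorem wss_equiv_of_sq [DecidableEq ι] (w w' : ι → K)
    (h : ∀ i, ∃ s : Kˣ, w' i = w i * (s : K)^2) :
    (weightedSumSquares K w).Equivalent (weightedSumSquares K w') := by
  choose s hs using h
  refine ⟨?_⟩
  convert QuadraticMap.isometryEquivBasisRepr (weightedSumSquares K w)
    ((Pi.basisFun K ι).unitsSMul s) using 1
  ext1 v
  classical
  simp only [basisRepr_apply, Module.Basis.unitsSMul_apply, weightedSumSquares_apply]
  refine Finset.sum_congr rfl fun j _ => ?_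
  rw [hs]
  have : (∑ x, v x • s x • (Pi.basisFun K ι) x) j = v j * s j := by
    simp [Pi.basisFun_apply, Pi.single_apply, Units.smul_def]
  rw [this, smul_eq_mul, smul_eq_mul]
  ring

theorem wss_equiv_perm (w : ι → K) (σ : Equiv.Perm ι) :
    (weightedSumSquares K w).Equivalent (weightedSumSquares K (w ∘ σ)) := by
  have : weightedSumSquares K (w ∘ σ) =
      (weightedSumSquares K w).comp
        (LinearEquiv.funCongrLeft K K σ.symm : (ι → K) →ₗ[K] (ι → K)) := by
    ext x
    simp only [comp_apply, weightedSumSquares_apply, LinearEquiv.coe_coe,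
      LinearEquiv.funCongrLeft_apply, LinearMap.funLeft_apply]
    exact Fintype.sum_equiv σ _ _ (fun i => by simp)
  rw [this]
  exact ⟨isometryEquivOfCompLinearEquiv _ _⟩

theorem equiv_smul_of {n : ℕ} (q : QuadraticForm K (Fin n → K))
    (v T : Fin n → K) (c : K) (hqv : q.Equivalent (weightedSumSquares K v))
    (h : ∀ i, ∃ s : Kˣ, c * T i = v i * (s : K)^2) :
    q.Equivalent (c • weightedSumSquares K T) := by
  rw [smul_wss]
  exact hqv.trans (wss_equiv_of_sq v _ h)

end helpers

theorem dvr_decomp {R : Type*} [CommRing R] [IsDomain R] [IsDiscreteValuationRing R]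
    {K : Type*} [Field K] [Algebra R K] [IsFractionRing R K]
    {π₀ : R} (hπ : Irreducible π₀) {x : K} (hx : x ≠ 0) :
    ∃ (ε : Rˣ) (e : ℕ) (s : Kˣ), e ≤ 1 ∧
      x = algebraMap R K ε * (algebraMap R K π₀)^e * (s : K)^2 := by
  obtain ⟨a, b, hb, rfl⟩ := IsFractionRing.div_surjective (A := R) x
  have hb0 : b ≠ 0 := nonZeroDivisors.ne_zero hb
  have ha0 : a ≠ 0 := by
    intro h
    apply hx
    simp [h]
  obtain ⟨m, u₁, rfl⟩ := IsDiscreteValuationRing.eq_unit_mul_pow_irreducible ha0 hπ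
  obtain ⟨n, u₂, rfl⟩ := IsDiscreteValuationRing.eq_unit_mul_pow_irreducible hb0 hπ
  have hπK : algebraMap R K π₀ ≠ 0 := by
    rw [map_ne_zero_iff _ (IsFractionRing.injective R K)]
    exact hπ.ne_zero
  have hu2K : algebraMap R K (u₂ : R) ≠ 0 := by
    rw [map_ne_zero_iff _ (IsFractionRing.injective R K)]
    exact u₂.ne_zero
  set πK : Kˣ := Units.mk0 (algebraMap R K π₀) hπK with hπKdef
  set d : ℤ := (m : ℤ) - n with hd
  set e : ℕ := (d % 2).toNat with he
  set t : ℤ := (d - e) / 2 with ht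
  have hde : d = 2 * t + e := by omega
  refine ⟨u₁ * u₂⁻¹, e, πK^t, by omega, ?_⟩
  have hcast : ((πK^t : Kˣ) : K)^2 = (algebraMap R K π₀)^(2*t : ℤ) := by
    rw [Units.val_zpow_eq_zpow_val]
    show ((algebraMap R K π₀ : K)^t)^2 = _
    rw [← zpow_natCast ((algebraMap R K π₀ : K)^t) 2, ← zpow_mul]
    congr 1
    ring
  have hmain : (algebraMap R K π₀)^e * (algebraMap R K π₀)^(2*t : ℤ) * (algebraMap R K π₀)^n
      = (algebraMap R K π₀)^m := by
    rw [← zpow_natCast (algebraMap R K π₀) e, ← zpow_natCast (algebraMap R K π₀) n,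
      ← zpow_natCast (algebraMap R K π₀) m, ← zpow_add₀ hπK, ← zpow_add₀ hπK]
    congr 1
    omega
  have hu : algebraMap R K (((u₁ * u₂⁻¹ : Rˣ) : R)) * algebraMap R K (u₂ : R)
      = algebraMap R K (u₁ : R) := by
    rw [← map_mul]
    congr 1
    rw [Units.val_mul, Units.inv_mul_cancel_right]
  rw [map_mul, map_mul, map_pow, map_pow,
    div_eq_iff (mul_ne_zero hu2K (pow_ne_zero _ hπK)), hcast, ← hu, ← hmain]
  ring

theorem quaternary_form_over_dvr_normal_form
    (R : Type*) [CommRing R] [IsDomain R] [IsDiscreteValuationRing R] (h2 : IsUnit (2 : R))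
    (K : Type*) [Field K] [Algebra R K] [IsFractionRing R K]
    (q : QuadraticForm K (Fin 4 → K)) (hq : q.polarBilin.Nondegenerate) :
    ∃ c : K, c ≠ 0 ∧
      ((∃ a b d : R, IsUnit a ∧ IsUnit b ∧ IsUnit d ∧
          q.Equivalent (c • weightedSumSquares K
            ![1, -(algebraMap R K a), -(algebraMap R K b),
              algebraMap R K a * algebraMap R K b * algebraMap R K d])) ∨
       (∃ a b π : R, IsUnit a ∧ IsUnit b ∧ Ideal.span {π} = IsLocalRing.maximalIdeal R ∧
          q.Equivalent (c • weightedSumSquares K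
            ![1, -(algebraMap R K a), -(algebraMap R K b), algebraMap R K π])) ∨
       (∃ a b π : R, IsUnit a ∧ IsUnit b ∧ Ideal.span {π} = IsLocalRing.maximalIdeal R ∧
          q.Equivalent (c • weightedSumSquares K
            ![1, -(algebraMap R K a), algebraMap R K π,
              -(algebraMap R K π * algebraMap R K b)]))) := by
  have h2K : (2 : K) ≠ 0 := by
    intro h
    apply h2.ne_zero
    apply IsFractionRing.injective R K
    rw [map_zero, map_ofNat, h]
  haveI : Invertible (2 : K) := invertibleOfNonzero h2K
  have hAne : ∀ g : Rˣ, algebraMap R K (g : R) ≠ 0 := fun g => by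
    rw [map_ne_zero_iff _ (IsFractionRing.injective R K)]
    exact g.ne_zero
  have hUinv : ∀ g : Rˣ, algebraMap R K ((g⁻¹ : Rˣ) : R) = (algebraMap R K (g : R))⁻¹ :=
    fun g => eq_inv_of_mul_eq_one_left (by rw [← map_mul, Units.inv_mul, map_one])
  -- diagonalize
  have hsep : (QuadraticMap.associated (R := K) q).SeparatingLeft := by
    intro x hx
    refine hq.1 x fun y => ?_
    have h := QuadraticMap.two_nsmul_associated K q
    calc polarBilin q x y = (2 • (associatedHom K) q) x y := by rw [h]
      _ = 2 • ((associatedHom K) q x y) := rfl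
      _ = 0 := by rw [show (associatedHom K) q x y = 0 from hx y, smul_zero]
  have hrank : Module.finrank K (Fin 4 → K) = 4 := by simp
  have H := q.equivalent_weightedSumSquares_units_of_nondegenerate' hsep
  rw [hrank] at H
  obtain ⟨w, hw⟩ := H
  have hcoe : weightedSumSquares K w = weightedSumSquares K (fun i => (w i : K)) := by
    ext x
    simp [weightedSumSquares_apply, Units.smul_def]
  rw [hcoe] at hw
  -- uniformizer
  obtain ⟨π₀, hπ⟩ := IsDiscreteValuationRing.exists_irreducible R
  have hπK : algebraMap R K π₀ ≠ 0 := by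
    rw [map_ne_zero_iff _ (IsFractionRing.injective R K)]
    exact hπ.ne_zero
  have hunif : ∀ g : Rˣ, Ideal.span {(g : R) * π₀} = IsLocalRing.maximalIdeal R := fun g =>
    ((IsDiscreteValuationRing.irreducible_iff_uniformizer _).mp
      (Associated.irreducible ⟨g, mul_comm _ _⟩ hπ)).symm
  -- decompose weights
  have hdec : ∀ i, ∃ (ε : Rˣ) (e : ℕ) (s : Kˣ), e ≤ 1 ∧
      (w i : K) = algebraMap R K ε * (algebraMap R K π₀)^e * (s : K)^2 :=
    fun i => dvr_decomp hπ (w i).ne_zero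
  choose ε eN s hle hval using hdec
  have hqu : q.Equivalent (weightedSumSquares K
      (fun i => algebraMap R K (ε i : R) * algebraMap R K π₀ ^ eN i)) := by
    refine hw.trans (wss_equiv_of_sq _ _ fun i => ⟨(s i)⁻¹, ?_⟩)
    rw [hval i, Units.val_inv_eq_inv_val]
    field_simp
  set σ := Tuple.sort eN with hσ
  have hqv : q.Equivalent (weightedSumSquares K
      ((fun i => algebraMap R K (ε i : R) * algebraMap R K π₀ ^ eN i) ∘ σ)) :=
    hqu.trans (wss_equiv_perm _ σ)
  have hmono := Tuple.monotone_sort eN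
  have h01 : eN (σ 0) ≤ eN (σ 1) := hmono (by decide)
  have h12 : eN (σ 1) ≤ eN (σ 2) := hmono (by decide)
  have h23 : eN (σ 2) ≤ eN (σ 3) := hmono (by decide)
  have hb0 : eN (σ 0) ≤ 1 := hle (σ 0)
  have hb1 : eN (σ 1) ≤ 1 := hle (σ 1)
  have hb2 : eN (σ 2) ≤ 1 := hle (σ 2)
  have hb3 : eN (σ 3) ≤ 1 := hle (σ 3)
  have hc0 : eN (σ 0) = 0 ∨ eN (σ 0) = 1 := by omega
  have hc1 : eN (σ 1) = 0 ∨ eN (σ 1) = 1 := by omega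
  have hc2 : eN (σ 2) = 0 ∨ eN (σ 2) = 1 := by omega
  have hc3 : eN (σ 3) = 0 ∨ eN (σ 3) = 1 := by omega
  rcases hc0 with hf0 | hf0
  · rcases hc1 with hf1 | hf1
    · rcases hc2 with hf2 | hf2
      · rcases hc3 with hf3 | hf3
        · -- (0,0,0,0) : case I
          refine ⟨algebraMap R K (ε (σ 0) : R), hAne _, Or.inl
            ⟨-((ε (σ 1) * (ε (σ 0))⁻¹ : Rˣ) : R), -((ε (σ 2) * (ε (σ 0))⁻¹ : Rˣ) : R),
             ((ε (σ 3) * ε (σ 0) * (ε (σ 1))⁻¹ * (ε (σ 2))⁻¹ : Rˣ) : R),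
             (Units.isUnit _).neg, (Units.isUnit _).neg, Units.isUnit _, ?_⟩⟩
          refine equiv_smul_of q _ _ _ hqv fun i => ?_
          fin_cases i <;> refine ⟨1, ?_⟩ <;>
            simp only [Function.comp_apply, hf0, hf1, hf2, hf3, pow_zero, mul_one, one_pow,
              Units.val_one, Matrix.cons_val_zero, Matrix.cons_val_one, Matrix.head_cons,
              Matrix.cons_val_two, Matrix.tail_cons, Matrix.cons_val_three, _root_.map_neg, neg_neg,
              Units.val_mul, map_mul, hUinv, Fin.isValue, Matrix.cons_val_fin_one, Fin.reduceFinMk,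
              Fin.zero_eta, Fin.mk_one] <;>
            (try field_simp) <;> (try ring)
        · -- (0,0,0,1) : case II
          refine ⟨algebraMap R K (ε (σ 0) : R), hAne _, Or.inr (Or.inl
            ⟨-((ε (σ 1) * (ε (σ 0))⁻¹ : Rˣ) : R), -((ε (σ 2) * (ε (σ 0))⁻¹ : Rˣ) : R),
             ((ε (σ 3) * (ε (σ 0))⁻¹ : Rˣ) : R) * π₀,
             (Units.isUnit _).neg, (Units.isUnit _).neg, hunif _, ?_⟩)⟩
          refine equiv_smul_of q _ _ _ hqv fun i => ?_
          have hr0 : True := trivial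
          have hr1 : True := trivial
          have hr2 : True := trivial
          have hr3 : True := trivial
          fin_cases i <;> refine ⟨1, ?_⟩ <;>
            simp only [Function.comp_apply, hf0, hf1, hf2, hf3, pow_zero, pow_one, mul_one, one_pow,
              Units.val_one, Matrix.cons_val_zero, Matrix.cons_val_one, Matrix.head_cons,
              Matrix.cons_val_two, Matrix.tail_cons, Matrix.cons_val_three, _root_.map_neg,
              neg_neg, Units.val_mul, map_mul, hUinv, Fin.isValue, Matrix.cons_val_fin_one,
              Fin.reduceFinMk, Fin.zero_eta, Fin.mk_one, Units.val_mk0, hr0, hr1, hr2, hr3,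
              neg_mul, mul_neg] <;>
            (try field_simp) <;> (try ring)
      · -- (0,0,1,1) : case III
        have hf3 : eN (σ 3) = 1 := by omega
        refine ⟨algebraMap R K (ε (σ 0) : R), hAne _, Or.inr (Or.inr
          ⟨-((ε (σ 1) * (ε (σ 0))⁻¹ : Rˣ) : R), -((ε (σ 3) * (ε (σ 2))⁻¹ : Rˣ) : R),
           ((ε (σ 2) * (ε (σ 0))⁻¹ : Rˣ) : R) * π₀,
           (Units.isUnit _).neg, (Units.isUnit _).neg, hunif _, ?_⟩)⟩
        refine equiv_smul_of q _ _ _ hqv fun i => ?_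
        have hr0 : True := trivial
        have hr1 : True := trivial
        have hr2 : True := trivial
        have hr3 : True := trivial
        fin_cases i <;> refine ⟨1, ?_⟩ <;>
          simp only [Function.comp_apply, hf0, hf1, hf2, hf3, pow_zero, pow_one, mul_one, one_pow,
              Units.val_one, Matrix.cons_val_zero, Matrix.cons_val_one, Matrix.head_cons,
              Matrix.cons_val_two, Matrix.tail_cons, Matrix.cons_val_three, _root_.map_neg,
              neg_neg, Units.val_mul, map_mul, hUinv, Fin.isValue, Matrix.cons_val_fin_one,
              Fin.reduceFinMk, Fin.zero_eta, Fin.mk_one, Units.val_mk0, hr0, hr1, hr2, hr3,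
              neg_mul, mul_neg] <;>
          (try field_simp) <;> (try ring)
    · -- (0,1,1,1) : case II after rotation
      have hf2 : eN (σ 2) = 1 := by omega
      have hf3 : eN (σ 3) = 1 := by omega
      have hr0 : (finRotate 4) 0 = 1 := rfl
      have hr1 : (finRotate 4) 1 = 2 := rfl
      have hr2 : (finRotate 4) 2 = 3 := rfl
      have hr3 : (finRotate 4) 3 = 0 := rfl
      refine ⟨algebraMap R K (ε (σ 1) : R) * algebraMap R K π₀, mul_ne_zero (hAne _) hπK,
        Or.inr (Or.inl
        ⟨-((ε (σ 2) * (ε (σ 1))⁻¹ : Rˣ) : R), -((ε (σ 3) * (ε (σ 1))⁻¹ : Rˣ) : R),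
         ((ε (σ 0) * (ε (σ 1))⁻¹ : Rˣ) : R) * π₀,
         (Units.isUnit _).neg, (Units.isUnit _).neg, hunif _, ?_⟩)⟩
      refine equiv_smul_of q _ _ _ (hqv.trans (wss_equiv_perm _ (finRotate 4))) fun i => ?_
      fin_cases i
      · refine ⟨1, ?_⟩
        simp only [Function.comp_apply, hf0, hf1, hf2, hf3, pow_zero, pow_one, mul_one, one_pow,
              Units.val_one, Matrix.cons_val_zero, Matrix.cons_val_one, Matrix.head_cons,
              Matrix.cons_val_two, Matrix.tail_cons, Matrix.cons_val_three, _root_.map_neg,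
              neg_neg, Units.val_mul, map_mul, hUinv, Fin.isValue, Matrix.cons_val_fin_one,
              Fin.reduceFinMk, Fin.zero_eta, Fin.mk_one, Units.val_mk0, hr0, hr1, hr2, hr3,
              neg_mul, mul_neg] <;> (try field_simp) <;> (try ring)
      · refine ⟨1, ?_⟩
        simp only [Function.comp_apply, hf0, hf1, hf2, hf3, pow_zero, pow_one, mul_one, one_pow,
              Units.val_one, Matrix.cons_val_zero, Matrix.cons_val_one, Matrix.head_cons,
              Matrix.cons_val_two, Matrix.tail_cons, Matrix.cons_val_three, _root_.map_neg,
              neg_neg, Units.val_mul, map_mul, hUinv, Fin.isValue, Matrix.cons_val_fin_one,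
              Fin.reduceFinMk, Fin.zero_eta, Fin.mk_one, Units.val_mk0, hr0, hr1, hr2, hr3,
              neg_mul, mul_neg] <;> (try field_simp) <;> (try ring)
      · refine ⟨1, ?_⟩
        simp only [Function.comp_apply, hf0, hf1, hf2, hf3, pow_zero, pow_one, mul_one, one_pow,
              Units.val_one, Matrix.cons_val_zero, Matrix.cons_val_one, Matrix.head_cons,
              Matrix.cons_val_two, Matrix.tail_cons, Matrix.cons_val_three, _root_.map_neg,
              neg_neg, Units.val_mul, map_mul, hUinv, Fin.isValue, Matrix.cons_val_fin_one,
              Fin.reduceFinMk, Fin.zero_eta, Fin.mk_one, Units.val_mk0, hr0, hr1, hr2, hr3,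
              neg_mul, mul_neg] <;> (try field_simp) <;> (try ring)
      · refine ⟨Units.mk0 _ hπK, ?_⟩
        simp only [Function.comp_apply, hf0, hf1, hf2, hf3, pow_zero, pow_one, mul_one, one_pow,
              Units.val_one, Matrix.cons_val_zero, Matrix.cons_val_one, Matrix.head_cons,
              Matrix.cons_val_two, Matrix.tail_cons, Matrix.cons_val_three, _root_.map_neg,
              neg_neg, Units.val_mul, map_mul, hUinv, Fin.isValue, Matrix.cons_val_fin_one,
              Fin.reduceFinMk, Fin.zero_eta, Fin.mk_one, Units.val_mk0, hr0, hr1, hr2, hr3,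
              neg_mul, mul_neg] <;> (try field_simp) <;> (try ring)
  · -- (1,1,1,1) : case I
    have hf1 : eN (σ 1) = 1 := by omega
    have hf2 : eN (σ 2) = 1 := by omega
    have hf3 : eN (σ 3) = 1 := by omega
    refine ⟨algebraMap R K (ε (σ 0) : R) * algebraMap R K π₀, mul_ne_zero (hAne _) hπK, Or.inl
      ⟨-((ε (σ 1) * (ε (σ 0))⁻¹ : Rˣ) : R), -((ε (σ 2) * (ε (σ 0))⁻¹ : Rˣ) : R),
       ((ε (σ 3) * ε (σ 0) * (ε (σ 1))⁻¹ * (ε (σ 2))⁻¹ : Rˣ) : R),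
       (Units.isUnit _).neg, (Units.isUnit _).neg, Units.isUnit _, ?_⟩⟩
    refine equiv_smul_of q _ _ _ hqv fun i => ?_
    have hr0 : True := trivial
    have hr1 : True := trivial
    have hr2 : True := trivial
    have hr3 : True := trivial
    fin_cases i <;> refine ⟨1, ?_⟩ <;>
      simp only [Function.comp_apply, hf0, hf1, hf2, hf3, pow_zero, pow_one, mul_one, one_pow,
              Units.val_one, Matrix.cons_val_zero, Matrix.cons_val_one, Matrix.head_cons,
              Matrix.cons_val_two, Matrix.tail_cons, Matrix.cons_val_three, _root_.map_neg,
              neg_neg, Units.val_mul, map_mul, hUinv, Fin.isValue, Matrix.cons_val_fin_one,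
              Fin.reduceFinMk, Fin.zero_eta, Fin.mk_one, Units.val_mk0, hr0, hr1, hr2, hr3,
              neg_mul, mul_neg] <;>
      (try field_simp) <;> (try ring)
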